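/- Non-violating trace transparency, backward direction: let φ ∈ SHMLnf be closed and guarded and let p be a system none of whose traces is violating with respect to φ (for every trace t' ∈ Act*, ¬(p ⊨v^{t'} φ)). Then for every trace t, transducer e' and system p', if ⟦φ⟧e[p] =t=> e'[p'] then p =t=> p', i.e., the instrumented system exhibits no weak trace behaviour (up to the underlying system component) that the unmonitored system cannot itself perform. -/

import Mathlib

set_option autoImplicit false

/-- A labelled transition system over observable actions `Act`;
`none` plays the role of the silent action τ. -/
structure LTS (Act : Type) where
  S : Type
  Tr : S → Option Act → S → Prop

namespace Enf

open scoped Classical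

variable {Act : Type}

/-- Zero or more silent steps. -/
def TauStar (L : LTS Act) : L.S → L.S → Prop :=
  Relation.ReflTransGen (fun p q => L.Tr p none q)

/-- The weak transition `p =a=> q`. -/
def WStep (L : LTS Act) (p : L.S) (a : Act) (q : L.S) : Prop :=
  ∃ p₁ p₂, TauStar L p p₁ ∧ L.Tr p₁ (some a) p₂ ∧ TauStar L p₂ q

/-- Weak trace `p =t=> q`. -/
inductive WTrace (L : LTS Act) : L.S → List Act → L.S → Prop
  | nil {p q : L.S} : TauStar L p q → WTrace L p [] q
  | cons {p r q : L.S} {a : Act} {t : List Act} :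
      WStep L p a r → WTrace L r t q → WTrace L p (a :: t) q

/-- SHML formulas: truth, falsehood, fixpoint variables, finite conjunctions,
modalities `[η]φ` (a guard set of actions together with an action-indexed
continuation, representing the symbolic action and the matching substitutions),
and greatest fixpoints. -/
inductive Frm (Act : Type) : Type where
  | tt : Frm Act
  | ff : Frm Act
  | var : ℕ → Frm Act
  | conj : (n : ℕ) → (Fin n → Frm Act) → Frm Act
  | box : Set Act → (Act → Frm Act) → Frm Act
  | max : ℕ → Frm Act → Frm Act

namespace Frm

/-- Free fixpoint variables. -/
def fv : Frm Act → Set ℕ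
  | .tt => ∅
  | .ff => ∅
  | .var X => {X}
  | .conj _ f => ⋃ i, fv (f i)
  | .box G k => ⋃ a ∈ G, fv (k a)
  | .max X φ => fv φ \ {X}

def Closed (φ : Frm Act) : Prop := fv φ = ∅

/-- Substitution `φ[ψ/X]` (of a closed formula `ψ`). -/
def subst : Frm Act → ℕ → Frm Act → Frm Act
  | .tt, _, _ => .tt
  | .ff, _, _ => .ff
  | .var Y, X, ψ => if Y = X then ψ else .var Y
  | .conj n f, X, ψ => .conj n (fun i => subst (f i) X ψ)
  | .box G k, X, ψ => .box G (fun a => subst (k a) X ψ)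
  | .max Y φ, X, ψ => if Y = X then .max Y φ else .max Y (subst φ X ψ)

/-- The normal-form fragment SHMLnf: conjunctions are conjunctions of
modalities with pairwise-disjoint guards, and each greatest fixpoint binds a
variable occurring free in its body. -/
inductive IsNF : Frm Act → Prop
  | tt : IsNF .tt
  | ff : IsNF .ff
  | var (X : ℕ) : IsNF (.var X)
  | conj (n : ℕ) (G : Fin n → Set Act) (k : Fin n → Act → Frm Act)
      (hdisj : ∀ i j : Fin n, i ≠ j → ∀ a : Act, a ∈ G i → a ∉ G j)
      (hk : ∀ i : Fin n, ∀ a ∈ G i, IsNF (k i a)) :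
      IsNF (.conj n fun i => .box (G i) (k i))
  | max (X : ℕ) (φ : Frm Act) (hfree : X ∈ fv φ) (hφ : IsNF φ) : IsNF (.max X φ)

/-- `gvar X φ`: the variable `X` does not occur unguarded (i.e. outside every
modality) in `φ`. -/
def gvar (X : ℕ) : Frm Act → Prop
  | .tt => True
  | .ff => True
  | .var Y => Y ≠ X
  | .conj _ f => ∀ i, gvar X (f i)
  | .box _ _ => True
  | .max Y φ => Y = X ∨ gvar X φ

/-- A formula is guarded if every occurrence of a fixpoint variable lies
beneath a modality. -/
def Guarded : Frm Act → Prop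
  | .tt => True
  | .ff => True
  | .var _ => True
  | .conj _ f => ∀ i, Guarded (f i)
  | .box G k => ∀ a ∈ G, Guarded (k a)
  | .max X φ => gvar X φ ∧ Guarded φ

/-- Number of top-level greatest-fixpoint binders. -/
def topMax : Frm Act → ℕ
  | .max _ φ => topMax φ + 1
  | _ => 0

end Frm

/-- Denotational semantics of (possibly open) formulas, relative to an
environment mapping fixpoint variables to sets of states; `max` is interpreted
as the greatest fixpoint of the induced monotone map. -/
def sem (L : LTS Act) : Frm Act → (ℕ → Set L.S) → Set L.S
  | .tt, _ => Set.univ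
  | .ff, _ => ∅
  | .var X, ρ => ρ X
  | .conj _ f, ρ => ⋂ i, sem L (f i) ρ
  | .box G k, ρ => {p | ∀ a ∈ G, ∀ q, WStep L p a q → q ∈ sem L (k a) ρ}
  | .max X φ, ρ => ⋃₀ {S | S ⊆ sem L φ (Function.update ρ X S)}

/-- Semantics of closed formulas. -/
def Sem (L : LTS Act) (φ : Frm Act) : Set L.S := sem L φ fun _ => ∅

/-- Satisfiability. -/
def SatIn (L : LTS Act) (φ : Frm Act) : Prop := (Sem L φ).Nonempty

/-- The violation relation `p ⊨v^t φ`, defined as the least relation closed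
under the given rules. -/
inductive Viol (L : LTS Act) : L.S → List Act → Frm Act → Prop
  | ff (p : L.S) : Viol L p [] .ff
  | conj {p : L.S} {t : List Act} {n : ℕ} {f : Fin n → Frm Act} (j : Fin n) :
      Viol L p t (f j) → Viol L p t (.conj n f)
  | box {p p' : L.S} {t : List Act} {a : Act} {G : Set Act} {k : Act → Frm Act} :
      a ∈ G → WStep L p a p' → Viol L p' t (k a) → Viol L p (a :: t) (.box G k)
  | max {p : L.S} {t : List Act} {X : ℕ} {φ : Frm Act} :
      Viol L p t (Frm.subst φ X (.max X φ)) → Viol L p t (.max X φ)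

/-- Transducers (enforcement monitors): identity, symbolic transformation
prefixes (a guard set of extended input actions, with `none` standing for the
insertion pattern •, an output per matched input, with `none` standing for τ,
and a continuation per matched input), finite selections, recursion, and
recursion variables. -/
inductive Trn (Act : Type) : Type where
  | id : Trn Act
  | prf : Set (Option Act) → (Option Act → Option Act) → (Option Act → Trn Act) → Trn Act
  | sel : (n : ℕ) → (Fin n → Trn Act) → Trn Act
  | fix : ℕ → Trn Act → Trn Act
  | var : ℕ → Trn Act

namespace Trn

def tsubst : Trn Act → ℕ → Trn Act → Trn Act
  | .id, _, _ => .id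
  | .prf G out k, x, s => .prf G out fun γ => tsubst (k γ) x s
  | .sel n f, x, s => .sel n fun i => tsubst (f i) x s
  | .fix y e, x, s => if y = x then .fix y e else .fix y (tsubst e x s)
  | .var y, x, s => if y = x then s else .var y

end Trn

/-- Transducer transitions: labels are pairs (input, output) where input
`none` is the insertion pattern • and output `none` is τ. -/
inductive TStep : Trn Act → Option Act × Option Act → Trn Act → Prop
  | id (a : Act) : TStep .id (some a, some a) .id
  | prf {G : Set (Option Act)} {out : Option Act → Option Act}
      {k : Option Act → Trn Act} {γ : Option Act} (h : γ ∈ G) :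
      TStep (.prf G out k) (γ, out γ) (k γ)
  | sel {n : ℕ} {f : Fin n → Trn Act} {l : Option Act × Option Act}
      {e' : Trn Act} (i : Fin n) (h : TStep (f i) l e') :
      TStep (.sel n f) l e'
  | fix {x : ℕ} {e : Trn Act} {l : Option Act × Option Act} {e' : Trn Act}
      (h : TStep (Trn.tsubst e x (.fix x e)) l e') :
      TStep (.fix x e) l e'

/-- Instrumentation of a transducer on a system. -/
inductive IStep (L : LTS Act) : Trn Act × L.S → Option Act → Trn Act × L.S → Prop
  | trn {e e' : Trn Act} {p p' : L.S} {a : Act} {μ : Option Act} :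
      L.Tr p (some a) p' → TStep e (some a, μ) e' → IStep L (e, p) μ (e', p')
  | asy {e : Trn Act} {p p' : L.S} :
      L.Tr p none p' → IStep L (e, p) none (e, p')
  | ins {e e' : Trn Act} {p : L.S} {μ : Option Act} :
      TStep e (none, μ) e' → IStep L (e, p) μ (e', p)
  | ter {e : Trn Act} {p p' : L.S} {a : Act} :
      L.Tr p (some a) p' →
      (∀ μ e', ¬ TStep e (some a, μ) e') →
      (∀ μ e', ¬ TStep e (none, μ) e') →
      IStep L (e, p) (some a) (Trn.id, p')

/-- The LTS of monitored systems `e[p]`. -/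
def instLTS (L : LTS Act) : LTS Act := ⟨Trn Act × L.S, IStep L⟩

/-- Strong bisimulations between (the state spaces of) two LTSs. -/
def IsBisim (L₁ L₂ : LTS Act) (R : L₁.S → L₂.S → Prop) : Prop :=
  ∀ s r, R s r →
    (∀ μ s', L₁.Tr s μ s' → ∃ r', L₂.Tr r μ r' ∧ R s' r') ∧
    (∀ μ r', L₂.Tr r μ r' → ∃ s', L₁.Tr s μ s' ∧ R s' r')

/-- Strong bisimilarity. -/
def Bisim (L₁ L₂ : LTS Act) (s : L₁.S) (r : L₂.S) : Prop :=
  ∃ R, IsBisim L₁ L₂ R ∧ R s r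

/-- The synthesis function `⟦-⟧e` from SHMLnf formulas to transducers:
formula variable `X` becomes monitor variable `X+1`; `tt` and `ff` become the
identity monitor; `max X.φ` becomes the corresponding recursive monitor; and a
normalised conjunction of modalities becomes a recursive selection (on the
fresh variable `0`) of symbolic prefixes that suppress (output τ, continue as
the recursion variable) actions whose continuation formula is `ff` and pass
through all other matched actions, continuing with the synthesis of the
respective continuation formula. -/
noncomputable def synth : Frm Act → Trn Act
  | .tt => .id
  | .ff => .id
  | .var X => .var (X + 1)
  | .max X φ => .fix (X + 1) (synth φ)
  | .box G k =>
      .prf {γ | ∃ a ∈ G, γ = some a}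
        (fun γ =>
          match γ with
          | some a => if k a = Frm.ff then none else some a
          | none => none)
        (fun γ =>
          match γ with
          | some a => if k a = Frm.ff then Trn.var 0 else synth (k a)
          | none => .id)
  | .conj n f => .fix 0 (.sel n fun i => synth (f i))

/-- Fuelled residual function (the fuel is consumed by fixpoint unfoldings;
on guarded closed SHMLnf formulas `topMax φ + 1` units of fuel suffice). -/
noncomputable def afterFuel : ℕ → Frm Act → Act → Frm Act
  | 0, _, _ => .tt
  | n + 1, φ, a =>
    match φ with
    | .max X ψ => afterFuel n (Frm.subst ψ X (.max X ψ)) a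
    | .conj m f =>
        if h : ∃ i : Fin m, ∃ G : Set Act, ∃ k : Act → Frm Act,
            f i = Frm.box G k ∧ a ∈ G
        then h.choose_spec.choose_spec.choose a
        else .tt
    | ψ => ψ

/-- The residual `after(φ, a)` of a guarded closed SHMLnf formula. -/
noncomputable def after (φ : Frm Act) (a : Act) : Frm Act :=
  afterFuel (Frm.topMax φ + 1) φ a

/-- Satisfaction relations (the coinductive rules of `⊨s`). -/
def IsSatRel (L : LTS Act) (R : L.S → Frm Act → Prop) : Prop :=
  (∀ p, ¬ R p .ff) ∧
  (∀ p (n : ℕ) (f : Fin n → Frm Act), R p (.conj n f) → ∀ i, R p (f i)) ∧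
  (∀ p (G : Set Act) (k : Act → Frm Act), R p (.box G k) →
      ∀ a ∈ G, ∀ q, WStep L p a q → R q (k a)) ∧
  (∀ p (X : ℕ) (φ : Frm Act), R p (.max X φ) → R p (Frm.subst φ X (.max X φ)))

/-- The largest satisfaction relation `⊨s`. -/
def SatCo (L : LTS Act) (p : L.S) (φ : Frm Act) : Prop :=
  ∃ R, IsSatRel L R ∧ R p φ


section Aux

variable {L : LTS Act}

lemma viol_not_tt {q : L.S} {t : List Act} (h : Viol L q t (Frm.tt : Frm Act)) : False := by
  cases h

lemma wstep_tau_front {q p p' : L.S} {a : Act} (h : L.Tr q none p) (hw : WStep L p a p') :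
    WStep L q a p' := by
  obtain ⟨p₁, p₂, h₁, h₂, h₃⟩ := hw
  exact ⟨p₁, p₂, Relation.ReflTransGen.head h h₁, h₂, h₃⟩

lemma viol_tau : ∀ {p : L.S} {t : List Act} {ψ : Frm Act}, Viol L p t ψ →
    ∀ q : L.S, L.Tr q none p → Viol L q t ψ := by
  intro p t ψ h
  induction h with
  | ff p => exact fun q hτ => Viol.ff q
  | conj j h ih => exact fun q hτ => Viol.conj j (ih q hτ)
  | box hmem hw hv _ => exact fun q hτ => Viol.box hmem (wstep_tau_front hτ hw) hv
  | max h ih => exact fun q hτ => Viol.max (ih q hτ)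

lemma viol_taustar {q p : L.S} {t : List Act} {ψ : Frm Act}
    (h : TauStar L q p) (hv : Viol L p t ψ) : Viol L q t ψ := by
  induction h using Relation.ReflTransGen.head_induction_on with
  | refl => exact hv
  | head hstep _ ih => exact viol_tau ih _ hstep

lemma fv_subst {X : ℕ} {χ : Frm Act} :
    ∀ ψ : Frm Act, Frm.fv (Frm.subst ψ X χ) ⊆ (Frm.fv ψ \ {X}) ∪ Frm.fv χ := by
  intro ψ
  induction ψ with
  | tt => simp [Frm.subst, Frm.fv]
  | ff => simp [Frm.subst, Frm.fv]
  | var Y =>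
      by_cases h : Y = X <;> simp [Frm.subst, Frm.fv, h]
  | conj n f ih =>
      intro y hy
      simp only [Frm.subst, Frm.fv, Set.mem_iUnion] at hy
      obtain ⟨i, hi⟩ := hy
      rcases ih i hi with h | h
      · exact Or.inl ⟨Set.mem_iUnion.2 ⟨i, h.1⟩, h.2⟩
      · exact Or.inr h
  | box G k ih =>
      intro y hy
      simp only [Frm.subst, Frm.fv, Set.mem_iUnion] at hy
      obtain ⟨a, ha, hi⟩ := hy
      rcases ih a hi with h | h
      · exact Or.inl ⟨Set.mem_iUnion.2 ⟨a, Set.mem_iUnion.2 ⟨ha, h.1⟩⟩, h.2⟩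
      · exact Or.inr h
  | max Y φ ih =>
      by_cases h : Y = X
      · subst h
        simp only [Frm.subst, if_pos rfl, Frm.fv, ↓reduceIte]
        intro y hy
        rw [Set.mem_diff] at hy
        exact Or.inl (Set.mem_diff_of_mem (Set.mem_diff_of_mem hy.1 hy.2) hy.2)
      · simp only [Frm.subst, if_neg h, Frm.fv]
        intro y hy
        rw [Set.mem_diff] at hy
        rcases ih hy.1 with h' | h'
        · rw [Set.mem_diff] at h'
          exact Or.inl (Set.mem_diff_of_mem (Set.mem_diff_of_mem h'.1 hy.2) h'.2)
        · exact Or.inr h'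

lemma mem_fv_subst {X Y : ℕ} {χ : Frm Act} (hXY : Y ≠ X) :
    ∀ ψ : Frm Act, Y ∈ Frm.fv ψ → Y ∈ Frm.fv (Frm.subst ψ X χ) := by
  intro ψ
  induction ψ with
  | tt => simp [Frm.fv]
  | ff => simp [Frm.fv]
  | var Z =>
      intro h
      simp only [Frm.fv, Set.mem_singleton_iff] at h
      subst h
      simp [Frm.subst, fun h => hXY h, Frm.fv]
  | conj n f ih =>
      intro h
      simp only [Frm.fv, Frm.subst, Set.mem_iUnion] at h ⊢
      obtain ⟨i, hi⟩ := h
      exact ⟨i, ih i hi⟩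
  | box G k ih =>
      intro h
      simp only [Frm.fv, Frm.subst, Set.mem_iUnion] at h ⊢
      obtain ⟨a, ha, hi⟩ := h
      exact ⟨a, ha, ih a hi⟩
  | max Z φ ih =>
      intro h
      by_cases hz : Z = X
      · simpa [Frm.subst, hz] using h
      · simp only [Frm.fv, Set.mem_diff] at h
        simp only [Frm.subst, if_neg hz, Frm.fv, Set.mem_diff]
        exact ⟨ih h.1, h.2⟩

lemma closed_unfold {X : ℕ} {ψ : Frm Act} (h : Frm.Closed (Frm.max X ψ)) :
    Frm.Closed (Frm.subst ψ X (Frm.max X ψ)) := by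
  have h' : Frm.fv ψ \ {X} = (∅ : Set ℕ) := h
  apply Set.eq_empty_of_subset_empty
  intro y hy
  rcases fv_subst ψ hy with h1 | h1
  · rw [h'] at h1; exact h1
  · rw [h] at h1; exact h1

lemma subst_eq_ff {χ : Frm Act} (hχ : χ ≠ Frm.ff) (ψ : Frm Act) (X : ℕ) :
    Frm.subst ψ X χ = Frm.ff ↔ ψ = Frm.ff := by
  cases ψ with
  | tt => simp [Frm.subst]
  | ff => simp [Frm.subst]
  | var Y => by_cases h : Y = X <;> simp [Frm.subst, h, hχ]
  | conj n f => simp [Frm.subst]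
  | box G k => simp [Frm.subst]
  | max Y φ => by_cases h : Y = X <;> simp [Frm.subst, h]

lemma isnf_subst {X : ℕ} {χ : Frm Act} (hχ : Frm.IsNF χ) :
    ∀ {ψ : Frm Act}, Frm.IsNF ψ → Frm.IsNF (Frm.subst ψ X χ) := by
  intro ψ h
  induction h with
  | tt => exact .tt
  | ff => exact .ff
  | var Y =>
      simp only [Frm.subst]
      split
      · exact hχ
      · exact .var Y
  | conj n G k hdisj hk ih =>
      exact Frm.IsNF.conj n G (fun i a => Frm.subst (k i a) X χ) hdisj ih
  | max Y φ hfree hφ ih =>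
      simp only [Frm.subst]
      split
      next h => exact .max Y φ hfree hφ
      next h => exact .max Y _ (mem_fv_subst h φ hfree) ih

lemma tsubst_synth_zero {s : Trn Act} :
    ∀ {ψ : Frm Act}, Frm.IsNF ψ → Trn.tsubst (synth ψ) 0 s = synth ψ := by
  intro ψ h
  induction h with
  | tt => rfl
  | ff => rfl
  | var X => simp [synth, Trn.tsubst]
  | conj n G k hdisj hk ih => simp [synth, Trn.tsubst]
  | max X φ hfree hφ ih => simp [synth, Trn.tsubst, ih]

lemma synth_subst {χ : Frm Act} (hχ : χ ≠ Frm.ff) :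
    ∀ (ψ : Frm Act) (X : ℕ),
      synth (Frm.subst ψ X χ) = Trn.tsubst (synth ψ) (X + 1) (synth χ) := by
  intro ψ
  induction ψ with
  | tt => intro X; rfl
  | ff => intro X; rfl
  | var Y =>
      intro X
      by_cases h : Y = X <;> simp [Frm.subst, synth, Trn.tsubst, h]
  | conj n f ih =>
      intro X
      have h0 : ¬ ((0 : ℕ) = X + 1) := by omega
      simp only [Frm.subst, synth, Trn.tsubst, if_neg h0]
      have hfun : (fun i => synth (Frm.subst (f i) X χ))
          = fun i => Trn.tsubst (synth (f i)) (X + 1) (synth χ) := funext fun i => ih i X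
      rw [hfun]
  | box G k ih =>
      intro X
      simp only [Frm.subst, synth, Trn.tsubst]
      congr 1
      · funext γ
        cases γ with
        | none => rfl
        | some a => simp only [subst_eq_ff hχ (k a) X]
      · funext γ
        cases γ with
        | none => rfl
        | some a =>
          simp only [subst_eq_ff hχ (k a) X]
          by_cases h : k a = Frm.ff
          · simp [h, Trn.tsubst]
          · simp [h, ih a X]
  | max Y φ ih =>
      intro X
      by_cases h : Y = X
      · subst h
        simp [Frm.subst, synth, Trn.tsubst]
      · have h1 : ¬ (Y + 1 = X + 1) := by omega
        simp [Frm.subst, synth, Trn.tsubst, h, h1, ih X]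

lemma isnf_conj_inv {n : ℕ} {f : Fin n → Frm Act} (h : Frm.IsNF (.conj n f)) :
    ∃ (G : Fin n → Set Act) (k : Fin n → Act → Frm Act),
      f = (fun i => .box (G i) (k i)) ∧
      (∀ i j, i ≠ j → ∀ a ∈ G i, a ∉ G j) ∧
      ∀ i, ∀ a ∈ G i, Frm.IsNF (k i a) := by
  cases h with
  | conj n G k hdisj hk => exact ⟨G, k, rfl, hdisj, hk⟩

lemma isnf_box_false {G : Set Act} {k : Act → Frm Act} (h : Frm.IsNF (.box G k)) : False := by
  cases h

lemma tstep_synth {e : Trn Act} {l : Option Act × Option Act} {e' : Trn Act}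
    (h : TStep e l e') :
    ∀ ψ : Frm Act, Frm.Closed ψ → Frm.IsNF ψ → e = synth ψ →
    ∃ a : Act, l.1 = some a ∧
      ((l.2 = some a ∧ ∃ ψ' : Frm Act, Frm.Closed ψ' ∧ Frm.IsNF ψ' ∧ e' = synth ψ' ∧
          ∀ (q q' : L.S) (t : List Act),
            WStep L q a q' → Viol L q' t ψ' → Viol L q (a :: t) ψ) ∨
       (l.2 = none ∧ ∀ q q' : L.S, WStep L q a q' → Viol L q [a] ψ)) := by
  induction h with
  | id a =>
      intro ψ hc hnf he
      refine ⟨a, rfl, Or.inl ⟨rfl, Frm.tt, rfl, .tt, rfl, ?_⟩⟩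
      exact fun q q' t _ hv => (viol_not_tt hv).elim
  | prf hmem =>
      intro ψ hc hnf he
      exfalso
      cases ψ with
      | tt => simp [synth] at he
      | ff => simp [synth] at he
      | var Y => simp [synth] at he
      | conj n f => simp [synth] at he
      | max X ψ' => simp [synth] at he
      | box G k => exact isnf_box_false hnf
  | sel i h ih =>
      intro ψ hc hnf he
      exfalso
      cases ψ with
      | tt => simp [synth] at he
      | ff => simp [synth] at he
      | var Y => simp [synth] at he
      | conj n f => simp [synth] at he
      | max X ψ' => simp [synth] at he
      | box G k => exact isnf_box_false hnf
  | fix h ih =>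
      intro ψ hc hnf he
      cases ψ with
      | tt => simp [synth] at he
      | ff => simp [synth] at he
      | var Y => simp [synth] at he
      | max X ψ' =>
          simp only [synth] at he
          injection he with h1 h2
          subst h1; subst h2
          have hne : (Frm.max X ψ' : Frm Act) ≠ Frm.ff := by simp
          have hrw : Trn.tsubst (synth ψ') (X + 1) (.fix (X + 1) (synth ψ'))
              = synth (Frm.subst ψ' X (Frm.max X ψ')) := (synth_subst hne ψ' X).symm
          have hnf' : Frm.IsNF (Frm.subst ψ' X (Frm.max X ψ')) := by
            cases hnf with
            | max _ _ hfree hφ => exact isnf_subst (Frm.IsNF.max X ψ' hfree hφ) hφ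
          obtain ⟨a, ha, hcase⟩ := ih (Frm.subst ψ' X (Frm.max X ψ')) (closed_unfold hc)
            hnf' hrw
          refine ⟨a, ha, ?_⟩
          rcases hcase with ⟨hout, ψ₂, hc₂, hnf₂, he₂, htrans⟩ | ⟨hout, hsup⟩
          · exact Or.inl ⟨hout, ψ₂, hc₂, hnf₂, he₂,
              fun q q' t hw hv => Viol.max (htrans q q' t hw hv)⟩
          · exact Or.inr ⟨hout, fun q q' hw => Viol.max (hsup q q' hw)⟩
      | box G k => exact (isnf_box_false hnf).elim
      | conj n f =>
          simp only [synth] at he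
          injection he with h1 h2
          subst h1
          obtain ⟨G, k, hf, hdisj, hk⟩ := isnf_conj_inv hnf
          subst hf
          rw [h2] at h
          have hsel : Trn.tsubst
              (.sel n fun i => synth (.box (G i) (k i))) 0
              (.fix 0 (.sel n fun i => synth (.box (G i) (k i))))
              = .sel n (fun i => Trn.tsubst (synth (.box (G i) (k i))) 0
                  (.fix 0 (.sel n fun i => synth (.box (G i) (k i))))) := rfl
          rw [hsel] at h
          cases h with
          | sel i h2 =>
            simp only [synth, Trn.tsubst] at h2
            cases h2 with
            | prf hmem =>
              obtain ⟨a, ha, rfl⟩ := hmem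
              refine ⟨a, rfl, ?_⟩
              by_cases hff : k i a = Frm.ff
              · refine Or.inr ⟨by simp [hff], ?_⟩
                intro q q' hw
                exact Viol.conj i (Viol.box ha hw (hff ▸ Viol.ff q'))
              · refine Or.inl ⟨by simp [hff], k i a, ?_, hk i a ha, ?_, ?_⟩
                · apply Set.eq_empty_of_subset_empty
                  intro y hy
                  have : y ∈ Frm.fv (Frm.conj n fun i => Frm.box (G i) (k i)) := by
                    simp only [Frm.fv, Set.mem_iUnion]
                    exact ⟨i, a, ha, hy⟩
                  rw [hc] at this
                  exact this
                · simp only [if_neg hff]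
                  exact tsubst_synth_zero (hk i a ha)
                · intro q q' t hw hv
                  exact Viol.conj i (Viol.box ha hw hv)

/-- The invariant carried along the instrumented execution. -/
def Inv (L : LTS Act) (e : Trn Act) (q : L.S) : Prop :=
  e = Trn.id ∨
    ∃ ψ : Frm Act, Frm.Closed ψ ∧ Frm.IsNF ψ ∧ e = synth ψ ∧ ∀ t, ¬ Viol L q t ψ

lemma istep_proj {e : Trn Act} {q : L.S} {μ : Option Act} {e' : Trn Act} {q' : L.S}
    (hInv : Inv L e q) (h : IStep L (e, q) μ (e', q')) : L.Tr q μ q' ∧ Inv L e' q' := by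
  cases h with
  | @trn _ _ _ _ a _ htr hts =>
      rcases hInv with rfl | ⟨ψ, hc, hnf, rfl, hvf⟩
      · cases hts
        exact ⟨htr, Or.inl rfl⟩
      · obtain ⟨b, hb1, hcase⟩ := tstep_synth (L := L) hts ψ hc hnf rfl
        have hab : a = b := by simpa using hb1
        subst hab
        have hwab : WStep L q a q' := ⟨q, q', .refl, htr, .refl⟩
        rcases hcase with ⟨hout, ψ', hc', hnf', rfl, htrans⟩ | ⟨hout, hsup⟩
        · simp only at hout
          subst hout
          refine ⟨htr, Or.inr ⟨ψ', hc', hnf', rfl, ?_⟩⟩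
          intro t hv
          exact hvf (a :: t) (htrans q q' t hwab hv)
        · exact absurd (hsup q q' hwab) (hvf [a])
  | asy htr =>
      refine ⟨htr, ?_⟩
      rcases hInv with rfl | ⟨ψ, hc, hnf, rfl, hvf⟩
      · exact Or.inl rfl
      · exact Or.inr ⟨ψ, hc, hnf, rfl, fun t hv => hvf t (viol_tau hv q htr)⟩
  | ins hts =>
      exfalso
      rcases hInv with rfl | ⟨ψ, hc, hnf, rfl, hvf⟩
      · cases hts
      · obtain ⟨b, hb1, _⟩ := tstep_synth (L := L) hts ψ hc hnf rfl
        simp at hb1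
  | ter htr hno hnoi => exact ⟨htr, Or.inl rfl⟩

lemma taustar_proj {s s' : (instLTS L).S} (h : TauStar (instLTS L) s s') :
    Inv L s.1 s.2 → TauStar L s.2 s'.2 ∧ Inv L s'.1 s'.2 := by
  induction h with
  | refl => exact fun hI => ⟨.refl, hI⟩
  | tail hst htr ih =>
      intro hI
      obtain ⟨hts, hI'⟩ := ih hI
      obtain ⟨h1, h2⟩ := istep_proj hI' htr
      exact ⟨hts.tail h1, h2⟩

lemma wtrace_proj {s s' : (instLTS L).S} {t : List Act}
    (h : WTrace (instLTS L) s t s') : Inv L s.1 s.2 → WTrace L s.2 t s'.2 := by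
  induction h with
  | nil hts => exact fun hI => WTrace.nil (taustar_proj hts hI).1
  | cons hw hrest ih =>
      intro hI
      obtain ⟨r₁, r₂, h1, h2, h3⟩ := hw
      obtain ⟨ht1, hI1⟩ := taustar_proj h1 hI
      obtain ⟨ha, hI2⟩ := istep_proj hI1 h2
      obtain ⟨ht2, hI3⟩ := taustar_proj h3 hI2
      exact WTrace.cons ⟨r₁.2, r₂.2, ht1, ha, ht2⟩ (ih hI3)

end Aux

/-- non-violating trace transparency, backward direction: if no
trace is violating for p w.r.t. the closed guarded SHMLnf formula φ, then every
weak trace of the instrumented system ⟦φ⟧e[p] (up to the underlying system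
component) is a weak trace of p. -/
theorem nonviolating_transparency_bwd (Act : Type) (L : LTS Act) (φ : Frm Act)
    (hclosed : φ.Closed) (hnf : φ.IsNF) (hguard : φ.Guarded)
    (p : L.S) (hnv : ∀ t' : List Act, ¬ Viol L p t' φ) :
    ∀ (t : List Act) (e' : Trn Act) (p' : L.S),
      WTrace (instLTS L) (synth φ, p) t (e', p') → WTrace L p t p' := by
  intro t e' p' h
  exact wtrace_proj h (Or.inr ⟨φ, hclosed, hnf, rfl, hnv⟩)

end Enf
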